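/- Let t ∈ ℚ⟦X⟧ be the formal power series satisfying t = 1 + X·t³ (the generating function of the ternary numbers). Then for every n ≥ 0, (2n + 1) · [X^n] t = binom(3n, n); that is, the coefficients of t are the ternary numbers (1/(2n+1))·binom(3n,n). These numbers count lattice paths from (0,0) to (n,0) with step set {(1,1),(-1,-2)}. -/

import Mathlib

open PowerSeries in
/-- Coefficient of `X * f'`. -/
private lemma aux_coeff_X_mul_deriv (f : ℚ⟦X⟧) (m : ℕ) :
    PowerSeries.coeff m (PowerSeries.X * PowerSeries.derivative ℚ f)
      = m * PowerSeries.coeff m f := by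
  cases m with
  | zero => simp [PowerSeries.coeff_zero_eq_constantCoeff, map_mul]
  | succ m =>
      rw [PowerSeries.coeff_succ_X_mul, PowerSeries.coeff_derivative]
      push_cast; ring

/-- The key binomial identity for ternary numbers. -/
private lemma aux_choose (n : ℕ) :
    (2 * (n+1) * (2*n+1) : ℚ) * ((3*n+3).choose (n+1))
      = 3 * (3*n+1) * (3*n+2) * ((3*n).choose n) := by
  have e1 := Nat.add_one_mul_choose_eq (3*n+2) n
  have e2 := Nat.choose_mul_succ_eq (3*n+1) n
  have e3 := Nat.choose_mul_succ_eq (3*n) n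
  rw [show 3*n+1+1-n = 2*n+2 by omega] at e2
  rw [show 3*n+1-n = 2*n+1 by omega] at e3
  have e1' : ((3*n+3 : ℕ) : ℚ) * ((3*n+2).choose n) = ((3*n+3).choose (n+1)) * (n+1) := by
    exact_mod_cast e1
  have e2' : (((3*n+1).choose n : ℕ) : ℚ) * (3*n+2) = ((3*n+2).choose n) * (2*n+2) := by
    exact_mod_cast e2
  have e3' : (((3*n).choose n : ℕ) : ℚ) * (3*n+1) = ((3*n+1).choose n) * (2*n+1) := by
    exact_mod_cast e3
  push_cast at e1' e2' e3' ⊢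
  linear_combination (-2*(2*n+1) : ℚ) * e1' - 3*(2*n+1) * e2' - (3*(3*n+2) : ℚ) * e3'

/-- Let `t ∈ ℚ⟦X⟧` satisfy `t = 1 + X·t³` (generating function of the ternary
numbers). Then for every `n`, `(2n+1)·[X^n]t = C(3n,n)`: the coefficients of `t` are the
ternary numbers `C(3n,n)/(2n+1)`, counting paths from `(0,0)` to `(n,0)` with step set
`{(1,1),(-1,-2)}`. -/
theorem stmt_15 (t : PowerSeries ℚ)
    (ht : t = 1 + PowerSeries.X * t ^ 3) (n : ℕ) :
    ((2 * n + 1 : ℕ) : ℚ) * PowerSeries.coeff n t = ((3 * n).choose n : ℚ) := by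
  set x : PowerSeries ℚ := PowerSeries.X with hx
  set d : PowerSeries ℚ := PowerSeries.derivative ℚ t with hdd
  set e : PowerSeries ℚ := PowerSeries.derivative ℚ d with hee
  have hD3 : PowerSeries.derivative ℚ (3 : PowerSeries ℚ) = 0 := by
    rw [← map_ofNat (PowerSeries.C) 3, PowerSeries.derivative_C]
  -- first derivative relation
  have h1 : d = t ^ 3 + x * (3 * t ^ 2 * d) := by
    nth_rewrite 1 [hdd, ht]
    rw [map_add, Derivation.map_one_eq_zero, zero_add, Derivation.leibniz,
      Derivation.leibniz_pow, PowerSeries.derivative_X]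
    simp only [smul_eq_mul, nsmul_eq_mul]
    push_cast; ring
  have hg2 : d * (1 - 3 * x * t ^ 2) = t ^ 3 := by linear_combination h1
  -- second derivative relation
  have h2 := congrArg (PowerSeries.derivative ℚ) hg2
  simp only [Derivation.leibniz, Derivation.leibniz_pow, map_sub, Derivation.map_one_eq_zero,
    hx, PowerSeries.derivative_X, hD3, smul_eq_mul, nsmul_eq_mul, ← hdd, ← hee] at h2
  rw [← hx] at h2
  push_cast at h2
  have hg3 : e * (1 - 3 * x * t ^ 2) = 6 * t ^ 2 * d + 6 * x * t * d ^ 2 := by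
    linear_combination h2
  -- the holonomic ODE satisfied by t
  have hDne : (1 - 3 * x * t ^ 2) ≠ 0 := by
    intro h
    have h0 := congrArg (PowerSeries.constantCoeff) h
    simp [hx, map_sub, map_mul] at h0
  have key : ((4 * x - 27 * x ^ 2) * e + (6 - 54 * x) * d - 6 * t)
      * (1 - 3 * x * t ^ 2) ^ 3 = 0 := by
    linear_combination (6*t + 6*t^2 - 6*x*t^4) * ht
      + (6 - 54*x - 12*x*t^2 + 24*x^2*t*d + 162*x^2*t^2 + 6*x^2*t^4 - 162*x^3*t*d
          - 72*x^3*t^3*d - 162*x^3*t^4 + 486*x^4*t^3*d) * hg2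
      + (4*x - 27*x^2 - 24*x^2*t^2 + 162*x^3*t^2 + 36*x^3*t^4 - 243*x^4*t^4) * hg3
  have hE : (4 * x - 27 * x ^ 2) * e + (6 - 54 * x) * d - 6 * t = 0 := by
    rcases mul_eq_zero.mp key with h | h
    · exact h
    · exact absurd h (pow_ne_zero 3 hDne)
  -- coefficient recurrence
  have hrec : ∀ m : ℕ, 2 * (m + 1) * (2 * m + 3) * PowerSeries.coeff (m + 1) t
      = 3 * (3 * m + 1) * (3 * m + 2) * PowerSeries.coeff m t := by
    intro m
    have hXe : x * e = PowerSeries.derivative ℚ (x * d) - d := by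
      rw [hee, hx, Derivation.leibniz, PowerSeries.derivative_X]
      simp only [smul_eq_mul]
      ring
    have hE2 : (4:ℚ) • (x * PowerSeries.derivative ℚ d)
        - (27:ℚ) • (x * PowerSeries.derivative ℚ (x * d)) + (27:ℚ) • (x * d)
        + (6:ℚ) • d - (54:ℚ) • (x * d) - (6:ℚ) • t = 0 := by
      rw [← hee]
      simp only [PowerSeries.smul_eq_C_mul, map_ofNat]
      linear_combination hE + 27 * x * hXe
    have hc := congrArg (PowerSeries.coeff m) hE2
    simp only [map_sub, map_add, map_smul, map_zero, smul_eq_mul] at hc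
    rw [aux_coeff_X_mul_deriv, aux_coeff_X_mul_deriv, hdd, aux_coeff_X_mul_deriv,
      PowerSeries.coeff_derivative] at hc
    linear_combination hc
  -- base case
  have ha0 : PowerSeries.coeff 0 t = 1 := by
    have h0 := congrArg (PowerSeries.constantCoeff) ht
    simp only [map_add, map_one, map_mul, ← hx] at h0
    simpa [PowerSeries.coeff_zero_eq_constantCoeff, hx] using h0
  -- induction
  induction n with
  | zero => simp [ha0]
  | succ n ih =>
      have hne : ((2:ℚ) * (n+1) * (2*n+1)) ≠ 0 := by positivity
      have hcid := aux_choose n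
      rw [show 3 * (n+1) = 3*n+3 by ring]
      push_cast at ih ⊢
      apply mul_left_cancel₀ hne
      linear_combination ((2*n+1 : ℚ)) * hrec n + (3*(3*n+1)*(3*n+2) : ℚ) * ih - hcid
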